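/- Let T be an affine injective map from the parameter space of NN({m_l}_{l=0}^L) to that of a wider NN({m'_l}_{l=0}^L) such that f_{T(θ)}(x) = f_θ(x) for every θ, every activation, and every input x. Suppose there exist a total index mapping I = {I_l}_{l=0}^L and reals β^[l]_j (l ∈ [L], j ∈ [m'_l] \ I_l^{-1}(0)) such that for every parameter θ, every sample (x, y), every layer l ∈ [L], and every index j ∈ [m'_l]: (i) if I_l(j) ≠ 0 then (f^[l]_{T(θ)})_j = (f^[l]_θ)_{I_l(j)} and (e^[l]_{T(θ)})_j = β^[l]_j (e^[l]_θ)_{I_l(j)}; (ii) if I_l(j) = 0 then (f^[l]_{T(θ)})_j is constant in x and (e^[l]_{T(θ)})_j = 0, where e^[l]_θ = z^[l]_θ ∘ g^[l]_θ. Then for any data S, loss ℓ and activation σ (each differentiable), T maps every critical point of the narrow network's empirical risk to a critical point of the wider network's empirical risk. -/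

import Mathlib

namespace EmbeddingPrinciple

/-- Parameters of a fully-connected NN: `(θ l).1 i j` is the weight `W^{[l+1]}_{ij}`
and `(θ l).2 i` is the bias `b^{[l+1]}_i` (the paper's layer `l` corresponds to index `l-1`).
Only the coordinates below the widths are meaningful for a concrete architecture. -/
abbrev NNParams : Type := ℕ → (ℕ → ℕ → ℝ) × (ℕ → ℝ)

/-- Feature vectors `f^{[l]}` (entrywise activation `σ`); `m` is the width function. -/
noncomputable def feat (σ : ℝ → ℝ) (m : ℕ → ℕ) (θ : NNParams) (x : ℕ → ℝ) : ℕ → ℕ → ℝ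
  | 0 => x
  | l + 1 => fun i =>
      σ ((∑ j ∈ Finset.range (m l), (θ l).1 i j * feat σ m θ x l j) + (θ l).2 i)

/-- Pre-activation of layer `l+1`: `W^{[l+1]} f^{[l]} + b^{[l+1]}`. -/
noncomputable def preact (σ : ℝ → ℝ) (m : ℕ → ℕ) (θ : NNParams) (x : ℕ → ℝ) (l i : ℕ) : ℝ :=
  (∑ j ∈ Finset.range (m l), (θ l).1 i j * feat σ m θ x l j) + (θ l).2 i

/-- Output `f_θ` of the `(K+1)`-layer network (the paper's `L` is `K+1`). -/
noncomputable def nnOut (σ : ℝ → ℝ) (m : ℕ → ℕ) (K : ℕ) (θ : NNParams) (x : ℕ → ℝ) :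
    ℕ → ℝ := fun i => preact σ m θ x K i

/-- Feature gradient `g^{[l+1]} = σ'(W^{[l+1]} f^{[l]} + b^{[l+1]})`. -/
noncomputable def gFeat (σ : ℝ → ℝ) (m : ℕ → ℕ) (θ : NNParams) (x : ℕ → ℝ) (l i : ℕ) : ℝ :=
  deriv σ (preact σ m θ x l i)

/-- Output truncated to the valid output coordinates. -/
noncomputable def truncOut (σ : ℝ → ℝ) (m : ℕ → ℕ) (K : ℕ) (θ : NNParams) (x : ℕ → ℝ) :
    ℕ → ℝ := fun i => if i < m (K + 1) then nnOut σ m K θ x i else 0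

/-- Empirical risk `R_S(θ) = (1/n) ∑ᵢ ℓ(f_θ(xᵢ), yᵢ)`. -/
noncomputable def risk (σ : ℝ → ℝ) (m : ℕ → ℕ) (K : ℕ)
    (loss : (ℕ → ℝ) → (ℕ → ℝ) → ℝ) {n : ℕ} (X Y : Fin n → ℕ → ℝ) (θ : NNParams) : ℝ :=
  (n : ℝ)⁻¹ * ∑ a : Fin n, loss (truncOut σ m K θ (X a)) (Y a)

/-- Update a single weight coordinate. -/
def updW (θ : NNParams) (l i j : ℕ) (t : ℝ) : NNParams := fun l' =>
  if l' = l then ((fun i' j' => if i' = i ∧ j' = j then t else (θ l).1 i' j'), (θ l).2)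
  else θ l'

/-- Update a single bias coordinate. -/
def updB (θ : NNParams) (l i : ℕ) (t : ℝ) : NNParams := fun l' =>
  if l' = l then ((θ l).1, fun i' => if i' = i then t else (θ l).2 i') else θ l'

/-- `θ` is a critical point of `R` : all partial derivatives with respect to the valid
coordinates of the `(K+1)`-layer architecture with width function `m` vanish. -/
def IsCritical (R : NNParams → ℝ) (m : ℕ → ℕ) (K : ℕ) (θ : NNParams) : Prop :=
  (∀ l, l ≤ K → ∀ i, i < m (l + 1) → ∀ j, j < m l →
      deriv (fun t => R (updW θ l i j t)) ((θ l).1 i j) = 0) ∧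
  (∀ l, l ≤ K → ∀ i, i < m (l + 1) →
      deriv (fun t => R (updB θ l i t)) ((θ l).2 i) = 0)

/-- Equality of two parameter tuples on all valid coordinates of the architecture. -/
def ParamEqOn (m : ℕ → ℕ) (K : ℕ) (θ₁ θ₂ : NNParams) : Prop :=
  ∀ l, l ≤ K → ∀ i, i < m (l + 1) →
    (∀ j, j < m l → (θ₁ l).1 i j = (θ₂ l).1 i j) ∧ (θ₁ l).2 i = (θ₂ l).2 i

/-- Error vectors by reversed index: `errRev … t = z^{[K+1-t]}`, where `z^{[K+1]} = ∇ℓ`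
(represented by the function `dloss`) and `z^{[l]} = (W^{[l+1]})ᵀ (z^{[l+1]} ∘ g^{[l+1]})`. -/
noncomputable def errRev (σ : ℝ → ℝ) (m : ℕ → ℕ) (K : ℕ) (θ : NNParams)
    (dloss : (ℕ → ℝ) → (ℕ → ℝ) → ℕ → ℝ) (x y : ℕ → ℝ) : ℕ → ℕ → ℝ
  | 0 => dloss (truncOut σ m K θ x) y
  | t + 1 => fun j =>
      ∑ i ∈ Finset.range (m (K + 1 - t)),
        (θ (K - t)).1 i j *
          (errRev σ m K θ dloss x y t i * (if t = 0 then 1 else gFeat σ m θ x (K - t) i))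

/-- `e^{[l]} = z^{[l]} ∘ g^{[l]}` (with `g^{[K+1]} = 1`). -/
noncomputable def errE (σ : ℝ → ℝ) (m : ℕ → ℕ) (K : ℕ) (θ : NNParams)
    (dloss : (ℕ → ℝ) → (ℕ → ℝ) → ℕ → ℝ) (x y : ℕ → ℝ) (l i : ℕ) : ℝ :=
  errRev σ m K θ dloss x y (K + 1 - l) i *
    (if l = K + 1 then 1 else gFeat σ m θ x (l - 1) i)

/-- Differentiability of the loss in its first argument (on each finite-dimensional
coordinate block). -/
def LossDiff (loss : (ℕ → ℝ) → (ℕ → ℝ) → ℝ) : Prop :=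
  ∀ (y : ℕ → ℝ) (d : ℕ),
    Differentiable ℝ (fun u : Fin d → ℝ => loss (fun i => if h : i < d then u ⟨i, h⟩ else 0) y)

/-- Widths after adding one neuron in the paper's layer `p+1`. -/
def widen (m : ℕ → ℕ) (p : ℕ) : ℕ → ℕ := fun l => if l = p + 1 then m (p + 1) + 1 else m l

/-- One-step null embedding `T^α_{l,0}` at the paper's layer `l = p+1`. -/
def nullEmb (m : ℕ → ℕ) (p : ℕ) (α : ℝ) (θ : NNParams) : NNParams := fun l =>
  if l = p then
    ((fun i j => if i = m (p + 1) then 0 else (θ p).1 i j),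
     (fun i => if i = m (p + 1) then α else (θ p).2 i))
  else if l = p + 1 then
    ((fun i j => if j = m (p + 1) then 0 else (θ (p + 1)).1 i j), (θ (p + 1)).2)
  else θ l

/-- One-step splitting embedding `T^α_{l,s}` at the paper's layer `l = p+1`,
splitting neuron `s`. -/
def splitEmb (m : ℕ → ℕ) (p s : ℕ) (α : ℝ) (θ : NNParams) : NNParams := fun l =>
  if l = p then
    ((fun i j => if i = m (p + 1) then (θ p).1 s j else (θ p).1 i j),
     (fun i => if i = m (p + 1) then (θ p).2 s else (θ p).2 i))
  else if l = p + 1 then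
    ((fun i j =>
        if j = s then (1 - α) * (θ (p + 1)).1 i s
        else if j = m (p + 1) then α * (θ (p + 1)).1 i s
        else (θ (p + 1)).1 i j),
     (θ (p + 1)).2)
  else θ l

section Aux

lemma feat_congr (σ : ℝ → ℝ) (m : ℕ → ℕ) {θ₁ θ₂ : NNParams} (x : ℕ → ℝ) :
    ∀ l, (∀ u, u < l → θ₁ u = θ₂ u) → feat σ m θ₁ x l = feat σ m θ₂ x l
  | 0, _ => rfl
  | l + 1, h => by
      funext i
      have hf := feat_congr σ m x l (fun u hu => h u (Nat.lt_succ_of_lt hu))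
      simp only [feat, hf, h l (Nat.lt_succ_self l)]

lemma updW_ne (θ : NNParams) (l i j : ℕ) (t : ℝ) {l' : ℕ} (h : l' ≠ l) :
    updW θ l i j t l' = θ l' := by simp [updW, h]

lemma updB_ne (θ : NNParams) (l i : ℕ) (t : ℝ) {l' : ℕ} (h : l' ≠ l) :
    updB θ l i t l' = θ l' := by simp [updB, h]

lemma updW_self (θ : NNParams) (l i j : ℕ) : updW θ l i j ((θ l).1 i j) = θ := by
  funext l'
  by_cases h : l' = l
  · subst h
    simp only [updW, if_pos rfl]
    have h1 : (fun i' j' => if i' = i ∧ j' = j then (θ l').1 i j else (θ l').1 i' j')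
        = (θ l').1 := by
      funext i' j'
      by_cases hc : i' = i ∧ j' = j
      · obtain ⟨h1, h2⟩ := hc; subst h1; subst h2; simp
      · simp [hc]
    rw [h1]; simp
  · simp [updW, h]

lemma updB_self (θ : NNParams) (l i : ℕ) : updB θ l i ((θ l).2 i) = θ := by
  funext l'
  by_cases h : l' = l
  · subst h
    simp only [updB, if_pos rfl]
    have h1 : (fun i' => if i' = i then (θ l').2 i else (θ l').2 i') = (θ l').2 := by
      funext i'
      by_cases hc : i' = i
      · subst hc; simp
      · simp [hc]
    rw [h1]; simp
  · simp [updB, h]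

/-- Forward propagated derivative of the pre-activations; layer index is `l + u`. -/
noncomputable def fwdP (σ : ℝ → ℝ) (m : ℕ → ℕ) (θ : NNParams) (x : ℕ → ℝ) (l : ℕ)
    (P0 : ℕ → ℝ) : ℕ → ℕ → ℝ
  | 0 => P0
  | u + 1 => fun i =>
      ∑ k ∈ Finset.range (m (l + u + 1)),
        (θ (l + u + 1)).1 i k * (gFeat σ m θ x (l + u) k * fwdP σ m θ x l P0 u k)

end Aux
section Alg

variable (σ : ℝ → ℝ) (m : ℕ → ℕ) (K : ℕ) (θ : NNParams)
  (dloss : (ℕ → ℝ) → (ℕ → ℝ) → ℕ → ℝ) (x y : ℕ → ℝ)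

lemma errE_top (i : ℕ) :
    errE σ m K θ dloss x y (K + 1) i = errRev σ m K θ dloss x y 0 i := by
  simp [errE]

lemma errRev_eq_sum (l' k : ℕ) (h : l' + 1 ≤ K) :
    errRev σ m K θ dloss x y (K - l') k
      = ∑ i ∈ Finset.range (m (l' + 2)),
          (θ (l' + 1)).1 i k * errE σ m K θ dloss x y (l' + 2) i := by
  have ht : K - l' = (K - l' - 1) + 1 := by omega
  rw [ht]
  show (∑ i ∈ Finset.range (m (K + 1 - (K - l' - 1))),
      (θ (K - (K - l' - 1))).1 i k *
        (errRev σ m K θ dloss x y (K - l' - 1) i *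
          (if K - l' - 1 = 0 then 1 else gFeat σ m θ x (K - (K - l' - 1)) i))) = _
  have h1 : K + 1 - (K - l' - 1) = l' + 2 := by omega
  have h2 : K - (K - l' - 1) = l' + 1 := by omega
  rw [h1, h2]
  refine Finset.sum_congr rfl fun i _ => ?_
  congr 1
  unfold errE
  have h3 : K + 1 - (l' + 2) = K - l' - 1 := by omega
  rw [h3]
  by_cases hc : l' + 2 = K + 1
  · rw [if_pos hc, if_pos (by omega)]
  · rw [if_neg hc, if_neg (by omega)]; norm_num

lemma sum_errE_fwdP (P0 : ℕ → ℝ) :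
    ∀ (u l : ℕ), l + u ≤ K →
      (∑ i ∈ Finset.range (m (l + u + 1)),
        errE σ m K θ dloss x y (l + u + 1) i * fwdP σ m θ x l P0 u i)
      = ∑ i ∈ Finset.range (m (l + 1)), errE σ m K θ dloss x y (l + 1) i * P0 i
  | 0, l, _ => by simp [fwdP]
  | u + 1, l, h => by
    have IH := sum_errE_fwdP P0 u l (by omega)
    rw [← IH]
    have hkey : ∀ k, errE σ m K θ dloss x y (l + u + 1) k
        = (∑ i ∈ Finset.range (m (l + u + 2)),
            (θ (l + u + 1)).1 i k * errE σ m K θ dloss x y (l + u + 2) i)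
          * gFeat σ m θ x (l + u) k := by
      intro k
      have hrev := errRev_eq_sum σ m K θ dloss x y (l + u) k (by omega)
      have h4 : K + 1 - (l + u + 1) = K - (l + u) := by omega
      have h5 : l + u + 1 - 1 = l + u := by omega
      have he : errE σ m K θ dloss x y (l + u + 1) k
          = errRev σ m K θ dloss x y (K - (l + u)) k * gFeat σ m θ x (l + u) k := by
        unfold errE
        rw [if_neg (by omega), h4, h5]
      rw [he, hrev]
    show (∑ i ∈ Finset.range (m (l + (u + 1) + 1)),
        errE σ m K θ dloss x y (l + (u + 1) + 1) i *
          ∑ k ∈ Finset.range (m (l + u + 1)),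
            (θ (l + u + 1)).1 i k * (gFeat σ m θ x (l + u) k * fwdP σ m θ x l P0 u k)) = _
    have h6 : l + (u + 1) + 1 = l + u + 2 := by omega
    rw [h6]
    simp only [Finset.mul_sum]
    rw [Finset.sum_comm]
    refine Finset.sum_congr rfl fun k _ => ?_
    rw [hkey k, Finset.sum_mul, Finset.sum_mul]
    refine Finset.sum_congr rfl fun i _ => ?_
    ring

lemma sum_errRev_fwdP (P0 : ℕ → ℝ) (l : ℕ) (hl : l ≤ K) :
    (∑ i ∈ Finset.range (m (K + 1)),
        errRev σ m K θ dloss x y 0 i * fwdP σ m θ x l P0 (K - l) i)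
      = ∑ i ∈ Finset.range (m (l + 1)), errE σ m K θ dloss x y (l + 1) i * P0 i := by
  have h := sum_errE_fwdP σ m K θ dloss x y P0 (K - l) l (by omega)
  have he : l + (K - l) = K := by omega
  rw [he] at h
  rw [← h]
  exact Finset.sum_congr rfl fun i _ => by rw [errE_top]

end Alg
section Anal

variable (σ : ℝ → ℝ) (m : ℕ → ℕ)

lemma hasDerivAt_preact_chain (hσ : Differentiable ℝ σ) (θ : NNParams) (x : ℕ → ℝ) (l : ℕ)
    (η : ℝ → NNParams) (t0 : ℝ)
    (hη : ∀ t l', l' ≠ l → η t l' = θ l')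
    (hη0 : η t0 = θ)
    (P0 : ℕ → ℝ)
    (hbase : ∀ i, HasDerivAt (fun t => preact σ m (η t) x l i) (P0 i) t0) :
    ∀ u i, HasDerivAt (fun t => preact σ m (η t) x (l + u) i)
      (fwdP σ m θ x l P0 u i) t0
  | 0, i => hbase i
  | u + 1, i => by
    have IH := hasDerivAt_preact_chain hσ θ x l η t0 hη hη0 P0 hbase u
    have hfun : ∀ t, preact σ m (η t) x (l + (u + 1)) i
        = (∑ k ∈ Finset.range (m (l + u + 1)),
            (θ (l + u + 1)).1 i k * σ (preact σ m (η t) x (l + u) k))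
          + (θ (l + u + 1)).2 i := by
      intro t
      have harr : l + (u + 1) = (l + u) + 1 := by omega
      rw [harr]
      unfold preact
      rw [hη t (l + u + 1) (by omega)]
      rfl
    have hd : HasDerivAt
        (fun t => (∑ k ∈ Finset.range (m (l + u + 1)),
            (θ (l + u + 1)).1 i k * σ (preact σ m (η t) x (l + u) k))
          + (θ (l + u + 1)).2 i)
        (∑ k ∈ Finset.range (m (l + u + 1)),
            (θ (l + u + 1)).1 i k *
              (deriv σ (preact σ m (η t0) x (l + u) k) * fwdP σ m θ x l P0 u k)) t0 := by
      refine HasDerivAt.add_const _ (HasDerivAt.fun_sum fun k _ => ?_)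
      exact (((hσ (preact σ m (η t0) x (l + u) k)).hasDerivAt).comp t0 (IH k)).const_mul _
    rw [hη0] at hd
    have hval : (∑ k ∈ Finset.range (m (l + u + 1)),
            (θ (l + u + 1)).1 i k *
              (deriv σ (preact σ m θ x (l + u) k) * fwdP σ m θ x l P0 u k))
        = fwdP σ m θ x l P0 (u + 1) i := by
      simp [fwdP, gFeat]
    rw [hval] at hd
    simp only [hfun]
    exact hd

lemma hasDerivAt_preact_updW (θ : NNParams) (x : ℕ → ℝ) (l i0 j0 : ℕ) (hj0 : j0 < m l)
    (t0 : ℝ) (i : ℕ) :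
    HasDerivAt (fun t => preact σ m (updW θ l i0 j0 t) x l i)
      (if i = i0 then feat σ m θ x l j0 else 0) t0 := by
  have hfeat : ∀ t, feat σ m (updW θ l i0 j0 t) x l = feat σ m θ x l := fun t =>
    feat_congr σ m x l (fun u hu => updW_ne θ l i0 j0 t (by omega))
  have hfun : ∀ t, preact σ m (updW θ l i0 j0 t) x l i
      = (∑ k ∈ Finset.range (m l),
          (if i = i0 ∧ k = j0 then t else (θ l).1 i k) * feat σ m θ x l k)
        + (θ l).2 i := by
    intro t
    unfold preact
    rw [hfeat t]
    simp [updW]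
  have h1 : HasDerivAt
      (fun t => (∑ k ∈ Finset.range (m l),
          (if i = i0 ∧ k = j0 then t else (θ l).1 i k) * feat σ m θ x l k)
        + (θ l).2 i)
      (∑ k ∈ Finset.range (m l),
          (if i = i0 ∧ k = j0 then (1:ℝ) else 0) * feat σ m θ x l k) t0 := by
    refine HasDerivAt.add_const _ (HasDerivAt.fun_sum fun k _ => ?_)
    by_cases hc : i = i0 ∧ k = j0
    · simp only [if_pos hc]
      simpa using (hasDerivAt_id t0).mul_const (feat σ m θ x l k)
    · simp only [if_neg hc]
      simpa using (hasDerivAt_const t0 ((θ l).1 i k)).mul_const (feat σ m θ x l k)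
  have h2 : (∑ k ∈ Finset.range (m l),
      (if i = i0 ∧ k = j0 then (1:ℝ) else 0) * feat σ m θ x l k)
      = if i = i0 then feat σ m θ x l j0 else 0 := by
    by_cases hi : i = i0
    · subst hi
      rw [if_pos rfl]
      simp only [true_and, ite_mul, one_mul, zero_mul]
      rw [Finset.sum_ite_eq' (Finset.range (m l)) j0 (fun k => feat σ m θ x l k)]
      rw [if_pos (Finset.mem_range.mpr hj0)]
    · simp [hi]
  rw [h2] at h1
  simp only [hfun]
  exact h1

lemma hasDerivAt_preact_updB (θ : NNParams) (x : ℕ → ℝ) (l i0 : ℕ)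
    (t0 : ℝ) (i : ℕ) :
    HasDerivAt (fun t => preact σ m (updB θ l i0 t) x l i)
      (if i = i0 then (1:ℝ) else 0) t0 := by
  have hfeat : ∀ t, feat σ m (updB θ l i0 t) x l = feat σ m θ x l := fun t =>
    feat_congr σ m x l (fun u hu => updB_ne θ l i0 t (by omega))
  have hfun : ∀ t, preact σ m (updB θ l i0 t) x l i
      = (∑ k ∈ Finset.range (m l), (θ l).1 i k * feat σ m θ x l k)
        + (if i = i0 then t else (θ l).2 i) := by
    intro t
    unfold preact
    rw [hfeat t]
    simp [updB]
  have h1 : HasDerivAt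
      (fun t => (∑ k ∈ Finset.range (m l), (θ l).1 i k * feat σ m θ x l k)
        + (if i = i0 then t else (θ l).2 i))
      (if i = i0 then (1:ℝ) else 0) t0 := by
    by_cases hi : i = i0
    · simp only [if_pos hi]
      exact (hasDerivAt_id t0).const_add _
    · simp only [if_neg hi]
      exact hasDerivAt_const t0 _
  simp only [hfun]
  exact h1

end Anal
section LossChain

/-- Extend a finite vector by zero. -/
noncomputable def extendF (d : ℕ) (u : Fin d → ℝ) : ℕ → ℝ :=
  fun i => if h : i < d then u ⟨i, h⟩ else 0

lemma extendF_update {d : ℕ} (u : Fin d → ℝ) (i : Fin d) (s : ℝ) :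
    extendF d (Function.update u i s) = Function.update (extendF d u) (i : ℕ) s := by
  funext j
  unfold extendF
  by_cases h : j < d
  · rw [dif_pos h, Function.update_apply, Function.update_apply]
    by_cases hji : j = (i : ℕ)
    · rw [if_pos (Fin.ext hji), if_pos hji]
    · rw [if_neg (fun hh => hji (congrArg Fin.val hh)), if_neg hji, dif_pos h]
  · rw [dif_neg h, Function.update_apply,
      if_neg (fun hh : j = (i : ℕ) => h (hh ▸ i.2)), dif_neg h]

lemma hasDerivAt_loss_comp (loss : (ℕ → ℝ) → (ℕ → ℝ) → ℝ) (hloss : LossDiff loss)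
    (dloss : (ℕ → ℝ) → (ℕ → ℝ) → ℕ → ℝ)
    (hdl : ∀ (u y : ℕ → ℝ) (i : ℕ),
        HasDerivAt (fun t => loss (Function.update u i t) y) (dloss u y i) (u i))
    (d : ℕ) (y : ℕ → ℝ) (v : ℝ → ℕ → ℝ) (v' : ℕ → ℝ) (t0 : ℝ)
    (hv : ∀ i, HasDerivAt (fun t => v t i) (v' i) t0)
    (hz : ∀ t i, ¬ i < d → v t i = 0) :
    HasDerivAt (fun t => loss (v t) y)
      (∑ i ∈ Finset.range d, dloss (v t0) y i * v' i) t0 := by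
  classical
  have hFd : Differentiable ℝ (fun u : Fin d → ℝ => loss (extendF d u) y) := hloss y d
  set F : (Fin d → ℝ) → ℝ := fun u => loss (extendF d u) y with hF
  set w : ℝ → Fin d → ℝ := fun t i => v t (i : ℕ) with hw
  have hvw : ∀ t, v t = extendF d (w t) := by
    intro t; funext i
    unfold extendF
    by_cases h : i < d
    · rw [dif_pos h]
    · rw [dif_neg h]; exact hz t i h
  have hpart : ∀ (u : Fin d → ℝ) (i : Fin d),
      fderiv ℝ F u (Pi.single i 1) = dloss (extendF d u) y (i : ℕ) := by
    intro u i
    have hupd : HasDerivAt (fun s => Function.update u i s) (Pi.single i (1:ℝ)) (u i) := by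
      rw [hasDerivAt_pi]
      intro j
      by_cases hji : j = i
      · subst hji
        simp only [Function.update_self, Pi.single_eq_same]
        simpa using hasDerivAt_id' (x := u j)
      · simp only [Function.update_of_ne hji, Pi.single_eq_of_ne hji]
        exact hasDerivAt_const _ _
    have hF1 : HasFDerivAt F (fderiv ℝ F u) (Function.update u i (u i)) := by
      rw [Function.update_eq_self]
      exact (hFd u).hasFDerivAt
    have h1 : HasDerivAt (fun s => F (Function.update u i s))
        (fderiv ℝ F u (Pi.single i 1)) (u i) :=
      hF1.comp_hasDerivAt (u i) hupd
    have h2 : HasDerivAt (fun s => F (Function.update u i s))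
        (dloss (extendF d u) y (i : ℕ)) (u i) := by
      have heq : (fun s => F (Function.update u i s))
          = fun s => loss (Function.update (extendF d u) (i : ℕ) s) y := by
        funext s
        rw [hF]
        simp only
        rw [extendF_update]
      rw [heq]
      have h3 := hdl (extendF d u) y (i : ℕ)
      have hpt : extendF d u (i : ℕ) = u i := by
        unfold extendF; rw [dif_pos i.2]
      rw [hpt] at h3
      exact h3
    exact h1.unique h2
  have hwd : HasDerivAt w (fun i : Fin d => v' (i : ℕ)) t0 := by
    rw [hasDerivAt_pi]
    intro i
    exact hv (i : ℕ)
  have hcomp : HasDerivAt (fun t => F (w t))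
      (fderiv ℝ F (w t0) (fun i : Fin d => v' (i : ℕ))) t0 :=
    ((hFd (w t0)).hasFDerivAt).comp_hasDerivAt t0 hwd
  have hlin : fderiv ℝ F (w t0) (fun i : Fin d => v' (i : ℕ))
      = ∑ i : Fin d, v' (i : ℕ) * fderiv ℝ F (w t0) (Pi.single i 1) := by
    have hb : (fun i : Fin d => v' (i : ℕ)) = ∑ i : Fin d, v' (i : ℕ) • (Pi.single i 1 : Fin d → ℝ) := by
      funext j
      rw [Finset.sum_apply]
      simp only [Pi.smul_apply, Pi.single_apply, smul_eq_mul, mul_ite, mul_one, mul_zero]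
      rw [Finset.sum_ite_eq]
      simp
    rw [hb, map_sum]
    refine Finset.sum_congr rfl fun i _ => ?_
    rw [map_smul]
    rfl
  have hfin : (fun t => loss (v t) y) = fun t => F (w t) := by
    funext t
    rw [hF]
    simp only
    rw [← hvw t]
  rw [hfin]
  have hsum : (∑ i ∈ Finset.range d, dloss (v t0) y i * v' i)
      = fderiv ℝ F (w t0) (fun i : Fin d => v' (i : ℕ)) := by
    rw [hlin, ← Fin.sum_univ_eq_sum_range (fun i => dloss (v t0) y i * v' i) d]
    refine Finset.sum_congr rfl fun i _ => ?_
    rw [hpart (w t0) i, ← hvw t0]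
    ring
  rw [hsum]
  exact hcomp

end LossChain
section Combine

variable (σ : ℝ → ℝ) (m : ℕ → ℕ)

lemma hasDerivAt_loss_updW (hσ : Differentiable ℝ σ)
    (loss : (ℕ → ℝ) → (ℕ → ℝ) → ℝ) (hloss : LossDiff loss)
    (dloss : (ℕ → ℝ) → (ℕ → ℝ) → ℕ → ℝ)
    (hdl : ∀ (u y : ℕ → ℝ) (i : ℕ),
        HasDerivAt (fun t => loss (Function.update u i t) y) (dloss u y i) (u i))
    (K : ℕ) (θ : NNParams) (x y : ℕ → ℝ) (l i0 j0 : ℕ)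
    (hl : l ≤ K) (hi0 : i0 < m (l + 1)) (hj0 : j0 < m l) :
    HasDerivAt (fun t => loss (truncOut σ m K (updW θ l i0 j0 t) x) y)
      (errE σ m K θ dloss x y (l + 1) i0 * feat σ m θ x l j0) ((θ l).1 i0 j0) := by
  set t0 := (θ l).1 i0 j0 with ht0
  set P0 : ℕ → ℝ := fun i => if i = i0 then feat σ m θ x l j0 else 0 with hP0
  have hη0 : updW θ l i0 j0 t0 = θ := updW_self θ l i0 j0
  have hchain := hasDerivAt_preact_chain σ m hσ θ x l (updW θ l i0 j0) t0
    (fun t l' h => updW_ne θ l i0 j0 t h) hη0 P0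
    (fun i => hasDerivAt_preact_updW σ m θ x l i0 j0 hj0 t0 i)
  set v : ℝ → ℕ → ℝ := fun t i => truncOut σ m K (updW θ l i0 j0 t) x i with hv
  set v' : ℕ → ℝ := fun i => if i < m (K + 1) then fwdP σ m θ x l P0 (K - l) i else 0
    with hv'
  have hvd : ∀ i, HasDerivAt (fun t => v t i) (v' i) t0 := by
    intro i
    by_cases h : i < m (K + 1)
    · have hc := hchain (K - l) i
      have he : l + (K - l) = K := by omega
      rw [he] at hc
      simp only [hv, hv', truncOut, nnOut, if_pos h]
      exact hc
    · simp only [hv, hv', truncOut, nnOut, if_neg h]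
      exact hasDerivAt_const _ _
  have hz : ∀ t i, ¬ i < m (K + 1) → v t i = 0 := by
    intro t i h; simp [hv, truncOut, h]
  have hmain := hasDerivAt_loss_comp loss hloss dloss hdl (m (K + 1)) y v v' t0 hvd hz
  have hv0 : v t0 = truncOut σ m K θ x := by
    funext i; simp only [hv]; rw [hη0]
  have hval : (∑ i ∈ Finset.range (m (K + 1)), dloss (v t0) y i * v' i)
      = errE σ m K θ dloss x y (l + 1) i0 * feat σ m θ x l j0 := by
    have hc : ∀ i ∈ Finset.range (m (K + 1)), dloss (v t0) y i * v' i
        = errRev σ m K θ dloss x y 0 i * fwdP σ m θ x l P0 (K - l) i := by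
      intro i hi
      rw [Finset.mem_range] at hi
      simp only [hv', if_pos hi, hv0]
      rfl
    rw [Finset.sum_congr rfl hc, sum_errRev_fwdP σ m K θ dloss x y P0 l hl]
    simp only [hP0, mul_ite, mul_zero]
    rw [Finset.sum_ite_eq' (Finset.range (m (l + 1))) i0
      (fun i => errE σ m K θ dloss x y (l + 1) i * feat σ m θ x l j0)]
    rw [if_pos (Finset.mem_range.mpr hi0)]
  rw [hval] at hmain
  exact hmain

lemma hasDerivAt_loss_updB (hσ : Differentiable ℝ σ)
    (loss : (ℕ → ℝ) → (ℕ → ℝ) → ℝ) (hloss : LossDiff loss)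
    (dloss : (ℕ → ℝ) → (ℕ → ℝ) → ℕ → ℝ)
    (hdl : ∀ (u y : ℕ → ℝ) (i : ℕ),
        HasDerivAt (fun t => loss (Function.update u i t) y) (dloss u y i) (u i))
    (K : ℕ) (θ : NNParams) (x y : ℕ → ℝ) (l i0 : ℕ)
    (hl : l ≤ K) (hi0 : i0 < m (l + 1)) :
    HasDerivAt (fun t => loss (truncOut σ m K (updB θ l i0 t) x) y)
      (errE σ m K θ dloss x y (l + 1) i0) ((θ l).2 i0) := by
  set t0 := (θ l).2 i0 with ht0
  set P0 : ℕ → ℝ := fun i => if i = i0 then (1:ℝ) else 0 with hP0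
  have hη0 : updB θ l i0 t0 = θ := updB_self θ l i0
  have hchain := hasDerivAt_preact_chain σ m hσ θ x l (updB θ l i0) t0
    (fun t l' h => updB_ne θ l i0 t h) hη0 P0
    (fun i => hasDerivAt_preact_updB σ m θ x l i0 t0 i)
  set v : ℝ → ℕ → ℝ := fun t i => truncOut σ m K (updB θ l i0 t) x i with hv
  set v' : ℕ → ℝ := fun i => if i < m (K + 1) then fwdP σ m θ x l P0 (K - l) i else 0
    with hv'
  have hvd : ∀ i, HasDerivAt (fun t => v t i) (v' i) t0 := by
    intro i
    by_cases h : i < m (K + 1)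
    · have hc := hchain (K - l) i
      have he : l + (K - l) = K := by omega
      rw [he] at hc
      simp only [hv, hv', truncOut, nnOut, if_pos h]
      exact hc
    · simp only [hv, hv', truncOut, nnOut, if_neg h]
      exact hasDerivAt_const _ _
  have hz : ∀ t i, ¬ i < m (K + 1) → v t i = 0 := by
    intro t i h; simp [hv, truncOut, h]
  have hmain := hasDerivAt_loss_comp loss hloss dloss hdl (m (K + 1)) y v v' t0 hvd hz
  have hv0 : v t0 = truncOut σ m K θ x := by
    funext i; simp only [hv]; rw [hη0]
  have hval : (∑ i ∈ Finset.range (m (K + 1)), dloss (v t0) y i * v' i)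
      = errE σ m K θ dloss x y (l + 1) i0 := by
    have hc : ∀ i ∈ Finset.range (m (K + 1)), dloss (v t0) y i * v' i
        = errRev σ m K θ dloss x y 0 i * fwdP σ m θ x l P0 (K - l) i := by
      intro i hi
      rw [Finset.mem_range] at hi
      simp only [hv', if_pos hi, hv0]
      rfl
    rw [Finset.sum_congr rfl hc, sum_errRev_fwdP σ m K θ dloss x y P0 l hl]
    simp only [hP0, mul_ite, mul_zero, mul_one]
    rw [Finset.sum_ite_eq' (Finset.range (m (l + 1))) i0
      (fun i => errE σ m K θ dloss x y (l + 1) i)]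
    rw [if_pos (Finset.mem_range.mpr hi0)]
  rw [hval] at hmain
  exact hmain

lemma hasDerivAt_risk_updW (hσ : Differentiable ℝ σ)
    (loss : (ℕ → ℝ) → (ℕ → ℝ) → ℝ) (hloss : LossDiff loss)
    (dloss : (ℕ → ℝ) → (ℕ → ℝ) → ℕ → ℝ)
    (hdl : ∀ (u y : ℕ → ℝ) (i : ℕ),
        HasDerivAt (fun t => loss (Function.update u i t) y) (dloss u y i) (u i))
    (K : ℕ) (θ : NNParams) (n : ℕ) (X Y : Fin n → ℕ → ℝ) (l i0 j0 : ℕ)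
    (hl : l ≤ K) (hi0 : i0 < m (l + 1)) (hj0 : j0 < m l) :
    HasDerivAt (fun t => risk σ m K loss X Y (updW θ l i0 j0 t))
      ((n : ℝ)⁻¹ * ∑ a : Fin n,
        errE σ m K θ dloss (X a) (Y a) (l + 1) i0 * feat σ m θ (X a) l j0)
      ((θ l).1 i0 j0) := by
  have h := HasDerivAt.const_mul ((n : ℝ)⁻¹) (HasDerivAt.fun_sum
    (fun a (_ : a ∈ Finset.univ) =>
      hasDerivAt_loss_updW σ m hσ loss hloss dloss hdl K θ (X a) (Y a) l i0 j0 hl hi0 hj0))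
  exact h

lemma hasDerivAt_risk_updB (hσ : Differentiable ℝ σ)
    (loss : (ℕ → ℝ) → (ℕ → ℝ) → ℝ) (hloss : LossDiff loss)
    (dloss : (ℕ → ℝ) → (ℕ → ℝ) → ℕ → ℝ)
    (hdl : ∀ (u y : ℕ → ℝ) (i : ℕ),
        HasDerivAt (fun t => loss (Function.update u i t) y) (dloss u y i) (u i))
    (K : ℕ) (θ : NNParams) (n : ℕ) (X Y : Fin n → ℕ → ℝ) (l i0 : ℕ)
    (hl : l ≤ K) (hi0 : i0 < m (l + 1)) :
    HasDerivAt (fun t => risk σ m K loss X Y (updB θ l i0 t))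
      ((n : ℝ)⁻¹ * ∑ a : Fin n, errE σ m K θ dloss (X a) (Y a) (l + 1) i0)
      ((θ l).2 i0) := by
  have h := HasDerivAt.const_mul ((n : ℝ)⁻¹) (HasDerivAt.fun_sum
    (fun a (_ : a ∈ Finset.univ) =>
      hasDerivAt_loss_updB σ m hσ loss hloss dloss hdl K θ (X a) (Y a) l i0 hl hi0))
  exact h

end Combine

/-- an affine injective output-preserving map admitting a total index
mapping with the stated feature/error-vector conditions is criticality preserving
(Lemma 8 in the paper). `errE` is the paper's `e^{[l]} = z^{[l]} ∘ g^{[l]}`. -/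
theorem criticality_preserving_from_total_index_mapping
    (K : ℕ) (hK : 1 ≤ K) (m m' : ℕ → ℕ)
    (h0 : m' 0 = m 0) (hLtop : m' (K + 1) = m (K + 1)) (hge : ∀ l, m l ≤ m' l)
    (T : NNParams → NNParams)
    -- affine and injective
    (hinj : Function.Injective T)
    (haff : IsLinearMap ℝ (fun θ : NNParams => T θ - T 0))
    -- output preserving, for every parameter, activation and input
    (hout : ∀ (σ : ℝ → ℝ) (θ : NNParams) (x : ℕ → ℝ) (i : ℕ), i < m (K + 1) →
        nnOut σ m' K (T θ) x i = nnOut σ m K θ x i)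
    -- total index mapping (`none` plays the role of the paper's index `0`)
    (I : ℕ → ℕ → Option ℕ)
    (hI0 : ∀ j, j < m' 0 → I 0 j = some j)
    (hIL : ∀ j, j < m' (K + 1) → I (K + 1) j = some j)
    (hIval : ∀ l, l ≤ K + 1 → ∀ j, j < m' l → ∀ s, I l j = some s → s < m l)
    (hItot : ∀ l, l ≤ K + 1 → ∀ s, s < m l → ∃ j, j < m' l ∧ I l j = some s)
    -- auxiliary variables β and conditions (i), (ii), for every parameter,
    -- activation, loss gradient and sample
    (β : ℕ → ℕ → ℝ)
    (hcond : ∀ (σ : ℝ → ℝ) (dloss : (ℕ → ℝ) → (ℕ → ℝ) → ℕ → ℝ) (θ : NNParams)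
        (x y : ℕ → ℝ) (l : ℕ), 1 ≤ l → l ≤ K + 1 → ∀ j, j < m' l →
        ((∀ s, I l j = some s →
            (l ≤ K → feat σ m' (T θ) x l j = feat σ m θ x l s) ∧
            errE σ m' K (T θ) dloss x y l j = β l j * errE σ m K θ dloss x y l s) ∧
         (I l j = none →
            (l ≤ K → ∀ x₁ x₂ : ℕ → ℝ, feat σ m' (T θ) x₁ l j = feat σ m' (T θ) x₂ l j) ∧
            errE σ m' K (T θ) dloss x y l j = 0)))
    -- then `T` preserves criticality for every data, loss and activation
    (σ : ℝ → ℝ) (hσ : Differentiable ℝ σ)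
    (loss : (ℕ → ℝ) → (ℕ → ℝ) → ℝ) (hloss : LossDiff loss)
    (dloss : (ℕ → ℝ) → (ℕ → ℝ) → ℕ → ℝ)
    (hdl : ∀ (u y : ℕ → ℝ) (i : ℕ),
        HasDerivAt (fun t => loss (Function.update u i t) y) (dloss u y i) (u i))
    (n : ℕ) (X Y : Fin n → ℕ → ℝ) (θ : NNParams)
    (hcrit : IsCritical (risk σ m K loss X Y) m K θ) :
    IsCritical (risk σ m' K loss X Y) m' K (T θ) := by
  have halg : ∀ (c : ℝ) (f g : Fin n → ℝ), (∀ a, f a = c * g a) →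
      (n : ℝ)⁻¹ * ∑ a : Fin n, f a = c * ((n : ℝ)⁻¹ * ∑ a : Fin n, g a) := by
    intro c f g h
    rw [Finset.sum_congr rfl (fun a _ => h a), ← Finset.mul_sum]
    ring
  -- narrow partial derivatives vanish (backprop form)
  have hW0 : ∀ l, l ≤ K → ∀ s, s < m (l + 1) → ∀ s', s' < m l →
      (n : ℝ)⁻¹ * ∑ a : Fin n,
        errE σ m K θ dloss (X a) (Y a) (l + 1) s * feat σ m θ (X a) l s' = 0 := by
    intro l hl s hs s' hs'
    rw [← (hasDerivAt_risk_updW σ m hσ loss hloss dloss hdl K θ n X Y l s s' hl hs hs').deriv]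
    exact hcrit.1 l hl s hs s' hs'
  have hB0 : ∀ l, l ≤ K → ∀ s, s < m (l + 1) →
      (n : ℝ)⁻¹ * ∑ a : Fin n, errE σ m K θ dloss (X a) (Y a) (l + 1) s = 0 := by
    intro l hl s hs
    rw [← (hasDerivAt_risk_updB σ m hσ loss hloss dloss hdl K θ n X Y l s hl hs).deriv]
    exact hcrit.2 l hl s hs
  constructor
  · intro l hl i hi j hj
    rw [(hasDerivAt_risk_updW σ m' hσ loss hloss dloss hdl K (T θ) n X Y l i j hl hi hj).deriv]
    rcases hopt : I (l + 1) i with _ | s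
    · have hzero : ∀ a : Fin n, (errE σ m' K (T θ) dloss (X a) (Y a) (l + 1) i *
          feat σ m' (T θ) (X a) l j) = 0 := fun a => by
        rw [((hcond σ dloss θ (X a) (Y a) (l + 1) (by omega) (by omega) i hi).2 hopt).2,
          zero_mul]
      rw [Finset.sum_congr rfl (fun a _ => hzero a)]
      simp
    · have hs : s < m (l + 1) := hIval (l + 1) (by omega) i hi s hopt
      have hE : ∀ a : Fin n, errE σ m' K (T θ) dloss (X a) (Y a) (l + 1) i
          = β (l + 1) i * errE σ m K θ dloss (X a) (Y a) (l + 1) s := fun a =>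
        ((hcond σ dloss θ (X a) (Y a) (l + 1) (by omega) (by omega) i hi).1 s hopt).2
      rcases Nat.eq_zero_or_pos l with hl0 | hlpos
      · subst hl0
        have hj' : j < m 0 := h0 ▸ hj
        rw [halg (β (0 + 1) i)
          (fun a => errE σ m' K (T θ) dloss (X a) (Y a) (0 + 1) i *
            feat σ m' (T θ) (X a) 0 j)
          (fun a => errE σ m K θ dloss (X a) (Y a) (0 + 1) s * feat σ m θ (X a) 0 j)
          (fun a => by simp only [hE a, feat]; ring)]
        rw [hW0 0 (Nat.zero_le K) s hs j hj', mul_zero]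
      · rcases hopt2 : I l j with _ | s'
        · -- feature constant in x
          have hcst := ((hcond σ dloss θ (fun _ => 0) (fun _ => 0) l (by omega) (by omega)
            j hj).2 hopt2).1 (by omega)
          rw [halg (β (l + 1) i * feat σ m' (T θ) (fun _ => 0) l j)
            (fun a => errE σ m' K (T θ) dloss (X a) (Y a) (l + 1) i *
              feat σ m' (T θ) (X a) l j)
            (fun a => errE σ m K θ dloss (X a) (Y a) (l + 1) s)
            (fun a => by simp only [hE a, hcst (X a) (fun _ => 0)]; ring)]
          rw [hB0 l hl s hs, mul_zero]
        · have hs' : s' < m l := hIval l (by omega) j hj s' hopt2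
          have hF : ∀ a : Fin n, feat σ m' (T θ) (X a) l j = feat σ m θ (X a) l s' :=
            fun a => ((hcond σ dloss θ (X a) (Y a) l (by omega) (by omega) j hj).1
              s' hopt2).1 (by omega)
          rw [halg (β (l + 1) i)
            (fun a => errE σ m' K (T θ) dloss (X a) (Y a) (l + 1) i *
              feat σ m' (T θ) (X a) l j)
            (fun a => errE σ m K θ dloss (X a) (Y a) (l + 1) s * feat σ m θ (X a) l s')
            (fun a => by simp only [hE a, hF a]; ring)]
          rw [hW0 l hl s hs s' hs', mul_zero]
  · intro l hl i hi
    rw [(hasDerivAt_risk_updB σ m' hσ loss hloss dloss hdl K (T θ) n X Y l i hl hi).deriv]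
    rcases hopt : I (l + 1) i with _ | s
    · have hzero : ∀ a : Fin n, errE σ m' K (T θ) dloss (X a) (Y a) (l + 1) i = 0 :=
        fun a => ((hcond σ dloss θ (X a) (Y a) (l + 1) (by omega) (by omega) i hi).2 hopt).2
      rw [Finset.sum_congr rfl (fun a _ => hzero a)]
      simp
    · have hs : s < m (l + 1) := hIval (l + 1) (by omega) i hi s hopt
      have hE : ∀ a : Fin n, errE σ m' K (T θ) dloss (X a) (Y a) (l + 1) i
          = β (l + 1) i * errE σ m K θ dloss (X a) (Y a) (l + 1) s := fun a =>
        ((hcond σ dloss θ (X a) (Y a) (l + 1) (by omega) (by omega) i hi).1 s hopt).2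
      rw [halg (β (l + 1) i)
        (fun a => errE σ m' K (T θ) dloss (X a) (Y a) (l + 1) i)
        (fun a => errE σ m K θ dloss (X a) (Y a) (l + 1) s) hE]
      rw [hB0 l hl s hs, mul_zero]

end EmbeddingPrinciple
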